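/- Let X be a countably infinite chain. Then the following are equivalent: (1) O(X) is generated by J = {α ∈ O(X) : Im(α) is infinite}; (2) the relative rank rank(O(X) : J) is finite; (3) X^0 ≠ ∅. -/

import Mathlib

open Set List
open scoped Classical

namespace Stmt16

variable {Y : Type*} [LinearOrder Y]

theorem foldr_comp_eq (l : List (Y → Y)) (e : Y → Y) :
    l.foldr (· ∘ ·) e = (l.foldr (· ∘ ·) id) ∘ e := by
  induction l with
  | nil => rfl
  | cons a l ih => rw [List.foldr_cons, List.foldr_cons, ih]; rfl

/-- generated by maps that are monotone with infinite range -/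
def Gen (α : Y → Y) : Prop :=
  ∃ l : List (Y → Y), l ≠ [] ∧ (∀ f ∈ l, Monotone f ∧ (Set.range f).Infinite) ∧
    α = l.foldr (· ∘ ·) id

theorem gen_single {α : Y → Y} (hm : Monotone α) (hr : (Set.range α).Infinite) : Gen α :=
  ⟨[α], by simp, by simp [hm, hr], rfl⟩

theorem Gen.comp {f g : Y → Y} (hf : Gen f) (hg : Gen g) : Gen (f ∘ g) := by
  obtain ⟨l₁, h₁, m₁, e₁⟩ := hf
  obtain ⟨l₂, h₂, m₂, e₂⟩ := hg
  refine ⟨l₁ ++ l₂, by simp [h₁], ?_, ?_⟩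
  · intro x hx
    rcases List.mem_append.mp hx with h | h
    exacts [m₁ x h, m₂ x h]
  · rw [List.foldr_append, foldr_comp_eq, ← e₁, ← e₂]

theorem range_infinite_of_ioi {x₀ : Y} (h : (Set.Ioi x₀).Infinite) {f : Y → Y}
    (hf : ∀ y, x₀ < y → f y = y) : (Set.range f).Infinite :=
  h.mono (fun y hy => ⟨y, hf y hy⟩)

theorem range_infinite_of_iio {x₀ : Y} (h : (Set.Iio x₀).Infinite) {f : Y → Y}
    (hf : ∀ y, y < x₀ → f y = y) : (Set.range f).Infinite :=
  h.mono (fun y hy => ⟨y, hf y hy⟩)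



set_option linter.unusedSectionVars false

section Maps

variable (x₀ : Y) (α : Y → Y)

/-- resolve the lower half -/
noncomputable def D0 : Y → Y := fun y => if y ≤ x₀ then α y else y

/-- collapse crossing mass with value `≤ b` to `x₀` -/
noncomputable def Ub (b : Y) : Y → Y := fun y => if x₀ ≤ y ∧ α y ≤ b then x₀ else y

/-- drop `x₀` down to `b` -/
noncomputable def Db (b : Y) : Y → Y := fun y => if y ≤ x₀ then min y b else y

/-- resolve the upper half -/
noncomputable def Ufin : Y → Y := fun y =>
  if x₀ ≤ y then (if α y ≤ x₀ then x₀ else α y) else y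

/-- closed form of the partial pipeline -/
noncomputable def Gb (c0 b : Y) : Y → Y := fun x =>
  if x ≤ x₀ then min x c0 else (if α x ≤ b then α x else x)

variable {x₀ α}

theorem D0_mono (hα : Monotone α) (hle : α x₀ ≤ x₀) : Monotone (D0 x₀ α) := by
  intro a b hab
  unfold D0
  by_cases ha : a ≤ x₀ <;> by_cases hb : b ≤ x₀ <;> simp only [ha, hb, if_true, if_false]
  · exact hα hab
  · exact le_of_lt (lt_of_le_of_lt ((hα ha).trans hle) (lt_of_not_ge hb))
  · exact absurd (hab.trans hb) ha
  · exact hab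

theorem D0_range (hIoi : (Set.Ioi x₀).Infinite) : (Set.range (D0 x₀ α)).Infinite :=
  range_infinite_of_ioi hIoi (fun y hy => by simp [D0, not_le.mpr hy])

theorem Ub_mono (hα : Monotone α) {b : Y} : Monotone (Ub x₀ α b) := by
  intro u v huv
  unfold Ub
  by_cases hu : x₀ ≤ u ∧ α u ≤ b
  · rw [if_pos hu]
    by_cases hv : x₀ ≤ v ∧ α v ≤ b
    · rw [if_pos hv]
    · rw [if_neg hv]; exact hu.1.trans huv
  · rw [if_neg hu]
    by_cases hv : x₀ ≤ v ∧ α v ≤ b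
    · rw [if_pos hv]
      rcases not_and_or.mp hu with h | h
      · exact le_of_lt (lt_of_not_ge h)
      · exact absurd ((hα huv).trans hv.2) h
    · rw [if_neg hv]; exact huv

theorem Ub_range (hIio : (Set.Iio x₀).Infinite) {b : Y} :
    (Set.range (Ub x₀ α b)).Infinite :=
  range_infinite_of_iio hIio (fun y hy => by
    simp only [Ub, ite_eq_right_iff]
    intro ⟨h1, _⟩; exact absurd h1 (not_le.mpr hy))

theorem Db_mono {b : Y} : Monotone (Db x₀ b) := by
  intro u v huv
  unfold Db
  by_cases hu : u ≤ x₀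
  · rw [if_pos hu]
    by_cases hv : v ≤ x₀
    · rw [if_pos hv]; exact min_le_min huv le_rfl
    · rw [if_neg hv]
      exact le_of_lt (lt_of_le_of_lt (min_le_left _ _) (lt_of_le_of_lt hu (lt_of_not_ge hv)))
  · rw [if_neg hu]
    by_cases hv : v ≤ x₀
    · exact absurd (huv.trans hv) hu
    · rw [if_neg hv]; exact huv

theorem Db_range (hIoi : (Set.Ioi x₀).Infinite) {b : Y} :
    (Set.range (Db x₀ b)).Infinite :=
  range_infinite_of_ioi hIoi (fun y hy => by simp [Db, not_le.mpr hy])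

theorem Ufin_mono (hα : Monotone α) : Monotone (Ufin x₀ α) := by
  intro u v huv
  unfold Ufin
  by_cases hu : x₀ ≤ u
  · rw [if_pos hu, if_pos (hu.trans huv)]
    by_cases hau : α u ≤ x₀
    · rw [if_pos hau]
      by_cases hav : α v ≤ x₀
      · rw [if_pos hav]
      · rw [if_neg hav]; exact le_of_lt (lt_of_not_ge hav)
    · rw [if_neg hau]
      by_cases hav : α v ≤ x₀
      · exact absurd ((hα huv).trans hav) hau
      · rw [if_neg hav]; exact hα huv
  · rw [if_neg hu]
    by_cases hv : x₀ ≤ v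
    · rw [if_pos hv]
      by_cases hav : α v ≤ x₀
      · rw [if_pos hav]; exact le_of_lt (lt_of_not_ge hu)
      · rw [if_neg hav]; exact le_of_lt ((lt_of_not_ge hu).trans (lt_of_not_ge hav))
    · rw [if_neg hv]; exact huv

theorem Ufin_range (hIio : (Set.Iio x₀).Infinite) : (Set.range (Ufin x₀ α)).Infinite :=
  range_infinite_of_iio hIio (fun y hy => by simp [Ufin, not_le.mpr hy])

end Maps


section Key

theorem keyCross {x₀ : Y} {α : Y → Y} (hIio : (Set.Iio x₀).Infinite)
    (hIoi : (Set.Ioi x₀).Infinite) (hα : Monotone α) (hfin : (Set.range α).Finite)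
    (hle : α x₀ ≤ x₀) : Gen α := by
  classical
  set CR : Finset Y := hfin.toFinset.filter (fun c => c ≤ x₀ ∧ ∃ z, x₀ < z ∧ α z = c)
    with hCRdef
  have hmem : ∀ c : Y, c ∈ CR ↔ (c ≤ x₀ ∧ ∃ z, x₀ < z ∧ α z = c) := by
    intro c
    constructor
    · intro h; exact (Finset.mem_filter.mp h).2
    · intro h
      refine Finset.mem_filter.mpr ⟨?_, h⟩
      obtain ⟨z, _, hz⟩ := h.2
      exact hfin.mem_toFinset.mpr ⟨z, hz⟩
  have hCRle : ∀ c ∈ CR, c ≤ x₀ := fun c hc => ((hmem c).mp hc).1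
  have hax0 : ∀ c ∈ CR, α x₀ ≤ c := by
    intro c hc
    obtain ⟨_, z, hz1, hz2⟩ := (hmem c).mp hc
    exact hz2 ▸ hα hz1.le
  have hcrossmem : ∀ x : Y, x₀ < x → α x ≤ x₀ → α x ∈ CR :=
    fun x h1 h2 => (hmem _).mpr ⟨h2, x, h1, rfl⟩
  have genD0 : Gen (D0 x₀ α) := gen_single (D0_mono hα hle) (D0_range hIoi)
  have genUb : ∀ b : Y, Gen (Ub x₀ α b) := fun _ => gen_single (Ub_mono hα) (Ub_range hIio)
  have genDb : ∀ b : Y, Gen (Db x₀ b) := fun _ => gen_single Db_mono (Db_range hIoi)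
  have genUfin : Gen (Ufin x₀ α) := gen_single (Ufin_mono hα) (Ufin_range hIio)
  rcases CR.eq_empty_or_nonempty with hCRe | hne
  · -- no crossing
    have heq : α = (Ufin x₀ α) ∘ (D0 x₀ α) := by
      funext x
      dsimp only [Function.comp_apply, D0, Ufin]
      by_cases hx : x ≤ x₀
      · rw [if_pos hx]
        by_cases hax : x₀ ≤ α x
        · have hxeq : α x = x₀ := le_antisymm ((hα hx).trans hle) hax
          rw [if_pos hax, hxeq, if_pos hle]
        · rw [if_neg hax]
      · rw [if_neg hx, if_pos (le_of_lt (lt_of_not_ge hx))]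
        have hnc : ¬ α x ≤ x₀ := by
          intro hc
          have := hcrossmem x (lt_of_not_ge hx) hc
          simp [hCRe] at this
        rw [if_neg hnc]
    rw [heq]; exact genUfin.comp genD0
  · set c0 := CR.min' hne with hc0def
    have hc0mem : c0 ∈ CR := CR.min'_mem hne
    have base : ∀ b ∈ CR, (∀ c ∈ CR, b ≤ c) → Gen (Gb x₀ α c0 b) := by
      intro b hb hminb
      have hbc0 : c0 = b := le_antisymm (CR.min'_le b hb) (hminb _ hc0mem)
      have heq : Gb x₀ α c0 b = (Db x₀ b) ∘ (Ub x₀ α b) := by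
        funext x
        dsimp only [Function.comp_apply, Gb, Ub, Db]
        by_cases hx : x ≤ x₀
        · rw [if_pos hx]
          by_cases hxge : x₀ ≤ x
          · have hxx : x = x₀ := le_antisymm hx hxge
            have hcond : x₀ ≤ x ∧ α x ≤ b := ⟨hxge, by rw [hxx]; exact hax0 b hb⟩
            rw [if_pos hcond, if_pos (le_refl x₀), hbc0, hxx, min_eq_right (hCRle b hb)]
          · have hncond : ¬ (x₀ ≤ x ∧ α x ≤ b) := fun hc => hxge hc.1
            rw [if_neg hncond, if_pos hx, hbc0]
        · rw [if_neg hx]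
          by_cases hc : α x ≤ b
          · have hcond : x₀ ≤ x ∧ α x ≤ b := ⟨le_of_lt (lt_of_not_ge hx), hc⟩
            have hmemx := hcrossmem x (lt_of_not_ge hx) (hc.trans (hCRle b hb))
            have haxb : α x = b := le_antisymm hc (hminb _ hmemx)
            rw [if_pos hcond, if_pos (le_refl x₀), if_pos hc, haxb, min_eq_right (hCRle b hb)]
          · have hncond : ¬ (x₀ ≤ x ∧ α x ≤ b) := fun hco => hc hco.2
            rw [if_neg hncond, if_neg hx, if_neg hc]
      rw [heq]; exact (genDb b).comp (genUb b)
    have key : ∀ n : ℕ, ∀ b ∈ CR, (CR.filter (fun c => c < b)).card = n →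
        Gen (Gb x₀ α c0 b) := by
      intro n
      induction n using Nat.strong_induction_on with
      | _ n ih =>
        intro b hb hcard
        rcases (CR.filter (fun c => c < b)).eq_empty_or_nonempty with hT | hT
        · refine base b hb ?_
          intro c hc
          by_contra hlt
          have hcmem : c ∈ CR.filter (fun c => c < b) :=
            Finset.mem_filter.mpr ⟨hc, lt_of_not_ge hlt⟩
          rw [hT] at hcmem
          exact absurd hcmem (Finset.notMem_empty c)
        · set b₂ := (CR.filter (fun c => c < b)).max' hT with hb₂def
          have hb₂memf : b₂ ∈ CR.filter (fun c => c < b) := Finset.max'_mem _ hT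
          have hb₂CR : b₂ ∈ CR := (Finset.mem_filter.mp hb₂memf).1
          have hb₂lt : b₂ < b := (Finset.mem_filter.mp hb₂memf).2
          have hb₂max : ∀ c ∈ CR, c < b → c ≤ b₂ := by
            intro c hc hlt
            rw [hb₂def]
            exact Finset.le_max' (CR.filter (fun z => z < b)) c (Finset.mem_filter.mpr ⟨hc, hlt⟩)
          have hsub : CR.filter (fun c => c < b₂) ⊆ CR.filter (fun c => c < b) := by
            intro c hc
            obtain ⟨h1, h2⟩ := Finset.mem_filter.mp hc
            exact Finset.mem_filter.mpr ⟨h1, h2.trans hb₂lt⟩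
          have hcardlt : (CR.filter (fun c => c < b₂)).card < n := by
            rw [← hcard]
            refine Finset.card_lt_card ⟨hsub, fun habs => ?_⟩
            have := Finset.mem_filter.mp (habs hb₂memf)
            exact lt_irrefl b₂ this.2
          have hGen2 := ih _ hcardlt b₂ hb₂CR rfl
          have hc0le : c0 ≤ b₂ := CR.min'_le b₂ hb₂CR
          have hbx0 : b ≤ x₀ := hCRle b hb
          have hb₂x0 : b₂ < x₀ := lt_of_lt_of_le hb₂lt hbx0
          have hc0lt : c0 < x₀ := lt_of_le_of_lt hc0le hb₂x0
          have heq : Gb x₀ α c0 b = (Db x₀ b) ∘ ((Ub x₀ α b) ∘ (Gb x₀ α c0 b₂)) := by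
            funext x
            dsimp only [Function.comp_apply, Gb, Ub, Db]
            by_cases hx : x ≤ x₀
            · simp only [if_pos hx]
              have h1 : ¬ (x₀ ≤ min x c0 ∧ α (min x c0) ≤ b) := by
                intro hco
                exact absurd (hco.1.trans (min_le_right x c0)) (not_le.mpr hc0lt)
              rw [if_neg h1, if_pos ((min_le_right x c0).trans hc0lt.le),
                min_eq_left ((min_le_right x c0).trans (hc0le.trans hb₂lt.le))]
            · simp only [if_neg hx]
              by_cases h2 : α x ≤ b₂
              · rw [if_pos h2]
                have haxlt : α x < x₀ := lt_of_le_of_lt h2 hb₂x0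
                have h3 : ¬ (x₀ ≤ α x ∧ α (α x) ≤ b) := fun hco =>
                  absurd hco.1 (not_le.mpr haxlt)
                rw [if_neg h3, if_pos haxlt.le, min_eq_left (h2.trans hb₂lt.le),
                  if_pos (h2.trans hb₂lt.le)]
              · rw [if_neg h2]
                by_cases hcb : α x ≤ b
                · have hcond : x₀ ≤ x ∧ α x ≤ b := ⟨le_of_lt (lt_of_not_ge hx), hcb⟩
                  rw [if_pos hcond, if_pos (le_refl x₀), min_eq_right hbx0, if_pos hcb]
                  have hmemx := hcrossmem x (lt_of_not_ge hx) (hcb.trans hbx0)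
                  rcases lt_or_eq_of_le hcb with hlt | heqq
                  · exact absurd (hb₂max _ hmemx hlt) h2
                  · exact heqq
                · have hncond : ¬ (x₀ ≤ x ∧ α x ≤ b) := fun hco => hcb hco.2
                  rw [if_neg hncond, if_neg hx, if_neg hcb]
          rw [heq]
          exact (genDb b).comp ((genUb b).comp hGen2)
    set bmax := CR.max' hne with hbmaxdef
    have hbmaxmem : bmax ∈ CR := CR.max'_mem hne
    have genG : Gen (Gb x₀ α c0 bmax) := key _ bmax hbmaxmem rfl
    have heqfin : α = (Ufin x₀ α) ∘ ((Gb x₀ α c0 bmax) ∘ (D0 x₀ α)) := by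
      funext x
      dsimp only [Function.comp_apply, D0, Gb, Ufin]
      by_cases hx : x ≤ x₀
      · rw [if_pos hx]
        have hax : α x ≤ x₀ := (hα hx).trans hle
        have haxc0 : α x ≤ c0 := (hα hx).trans (hax0 c0 hc0mem)
        rw [if_pos hax, min_eq_left haxc0]
        by_cases hge : x₀ ≤ α x
        · have hxeq : α x = x₀ := le_antisymm hax hge
          rw [if_pos hge, hxeq, if_pos hle]
        · rw [if_neg hge]
      · rw [if_neg hx, if_neg hx]
        by_cases hc : α x ≤ x₀
        · have hmemx := hcrossmem x (lt_of_not_ge hx) hc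
          have hbm : α x ≤ bmax := CR.le_max' _ hmemx
          rw [if_pos hbm]
          by_cases hge : x₀ ≤ α x
          · have hxeq : α x = x₀ := le_antisymm hc hge
            rw [if_pos hge, hxeq, if_pos hle]
          · rw [if_neg hge]
        · have hnb : ¬ α x ≤ bmax := fun habs => hc (habs.trans (hCRle bmax hbmaxmem))
          rw [if_neg hnb, if_pos (le_of_lt (lt_of_not_ge hx)), if_neg hc]
    rw [heqfin]
    exact genUfin.comp (genG.comp genD0)

theorem gen_of_dual {α : Y → Y} (h : @Gen Yᵒᵈ _ α) : Gen α := by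
  obtain ⟨l, hne, hm, he⟩ := h
  refine ⟨l, hne, ?_, he⟩
  intro f hf
  refine ⟨?_, (hm f hf).2⟩
  intro a b hab
  exact (hm f hf).1 (show OrderDual.toDual b ≤ OrderDual.toDual a from hab)

theorem gen_all {x₀ : Y} (hIio : (Set.Iio x₀).Infinite) (hIoi : (Set.Ioi x₀).Infinite)
    {α : Y → Y} (hα : Monotone α) : Gen α := by
  rcases Set.finite_or_infinite (Set.range α) with hfin | hinf
  · rcases le_or_gt (α x₀) x₀ with hle | hlt
    · exact keyCross hIio hIoi hα hfin hle
    · apply gen_of_dual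
      exact keyCross (x₀ := OrderDual.toDual x₀) (α := α)
        (show (Set.Iio (OrderDual.toDual x₀)).Infinite from hIoi)
        (show (Set.Ioi (OrderDual.toDual x₀)).Infinite from hIio)
        (fun a b hab => hα (show OrderDual.ofDual b ≤ OrderDual.ofDual a from hab))
        hfin hlt.le
  · exact gen_single hα hinf

end Key

section NoGen

theorem sideIic (Hno : ∀ x : Y, (Set.Iic x).Finite ∨ (Set.Ici x).Finite)
    {f : Y → Y} (hf : Monotone f) (hr : (Set.range f).Infinite) {x : Y}
    (hx : (Set.Iic x).Finite) : (Set.Iic (f x)).Finite := by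
  by_contra h
  have h2 : (Set.Ici (f x)).Finite := (Hno (f x)).resolve_left h
  apply hr
  have hsub : Set.range f ⊆ f '' (Set.Iic x) ∪ Set.Ici (f x) := by
    rintro _ ⟨y, rfl⟩
    rcases le_total y x with hy | hy
    · exact Or.inl ⟨y, hy, rfl⟩
    · exact Or.inr (hf hy)
  exact ((hx.image f).union h2).subset hsub

theorem sideIci (Hno : ∀ x : Y, (Set.Iic x).Finite ∨ (Set.Ici x).Finite)
    {f : Y → Y} (hf : Monotone f) (hr : (Set.range f).Infinite) {x : Y}
    (hx : (Set.Ici x).Finite) : (Set.Ici (f x)).Finite := by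
  by_contra h
  have h2 : (Set.Iic (f x)).Finite := (Hno (f x)).resolve_right h
  apply hr
  have hsub : Set.range f ⊆ f '' (Set.Ici x) ∪ Set.Iic (f x) := by
    rintro _ ⟨y, rfl⟩
    rcases le_total x y with hy | hy
    · exact Or.inl ⟨y, hy, rfl⟩
    · exact Or.inr (hf hy)
  exact ((hx.image f).union h2).subset hsub

theorem chainIic (Hno : ∀ x : Y, (Set.Iic x).Finite ∨ (Set.Ici x).Finite)
    (l : List (Y → Y)) (hl : ∀ f ∈ l, Monotone f ∧ (Set.range f).Infinite) {x : Y}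
    (hx : (Set.Iic x).Finite) : (Set.Iic (l.foldr (· ∘ ·) id x)).Finite := by
  induction l with
  | nil => exact hx
  | cons f l ih =>
    have hih := ih (fun g hg => hl g (List.mem_cons_of_mem f hg))
    exact sideIic Hno (hl f List.mem_cons_self).1 (hl f List.mem_cons_self).2 hih

theorem chainIci (Hno : ∀ x : Y, (Set.Iic x).Finite ∨ (Set.Ici x).Finite)
    (l : List (Y → Y)) (hl : ∀ f ∈ l, Monotone f ∧ (Set.range f).Infinite) {x : Y}
    (hx : (Set.Ici x).Finite) : (Set.Ici (l.foldr (· ∘ ·) id x)).Finite := by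
  induction l with
  | nil => exact hx
  | cons f l ih =>
    have hih := ih (fun g hg => hl g (List.mem_cons_of_mem f hg))
    exact sideIci Hno (hl f List.mem_cons_self).1 (hl f List.mem_cons_self).2 hih

theorem imageInfIic (hall : ∀ x : Y, (Set.Iic x).Finite) {f : Y → Y} (hf : Monotone f)
    (hr : (Set.range f).Infinite) {S : Set Y} (hS : S.Infinite) : (f '' S).Infinite := by
  by_contra h
  rw [Set.not_infinite] at h
  apply hr
  have hsub : Set.range f ⊆ ⋃ v ∈ f '' S, Set.Iic v := by
    rintro _ ⟨y, rfl⟩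
    obtain ⟨s, hsS, hys⟩ : ∃ s ∈ S, y ≤ s := by
      by_contra hc
      push_neg at hc
      exact hS ((hall y).subset (fun s hs => (hc s hs).le))
    exact Set.mem_biUnion ⟨s, hsS, rfl⟩ (hf hys)
  exact (h.biUnion (fun v _ => hall v)).subset hsub

theorem imageInfIci (hall : ∀ x : Y, (Set.Ici x).Finite) {f : Y → Y} (hf : Monotone f)
    (hr : (Set.range f).Infinite) {S : Set Y} (hS : S.Infinite) : (f '' S).Infinite := by
  by_contra h
  rw [Set.not_infinite] at h
  apply hr
  have hsub : Set.range f ⊆ ⋃ v ∈ f '' S, Set.Ici v := by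
    rintro _ ⟨y, rfl⟩
    obtain ⟨s, hsS, hys⟩ : ∃ s ∈ S, s ≤ y := by
      by_contra hc
      push_neg at hc
      exact hS ((hall y).subset (fun s hs => (hc s hs).le))
    exact Set.mem_biUnion ⟨s, hsS, rfl⟩ (hf hys)
  exact (h.biUnion (fun v _ => hall v)).subset hsub

theorem foldrInfIic [Infinite Y] (hall : ∀ x : Y, (Set.Iic x).Finite)
    (l : List (Y → Y)) (hl : ∀ f ∈ l, Monotone f ∧ (Set.range f).Infinite) :
    (Set.range (l.foldr (· ∘ ·) id)).Infinite := by
  induction l with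
  | nil => simpa using Set.infinite_univ
  | cons f l ih =>
    have hih := ih (fun g hg => hl g (List.mem_cons_of_mem f hg))
    rw [List.foldr_cons]
    show (Set.range (f ∘ l.foldr (· ∘ ·) id)).Infinite
    rw [Set.range_comp]
    exact imageInfIic hall (hl f List.mem_cons_self).1 (hl f List.mem_cons_self).2 hih

theorem foldrInfIci [Infinite Y] (hall : ∀ x : Y, (Set.Ici x).Finite)
    (l : List (Y → Y)) (hl : ∀ f ∈ l, Monotone f ∧ (Set.range f).Infinite) :
    (Set.range (l.foldr (· ∘ ·) id)).Infinite := by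
  induction l with
  | nil => simpa using Set.infinite_univ
  | cons f l ih =>
    have hih := ih (fun g hg => hl g (List.mem_cons_of_mem f hg))
    rw [List.foldr_cons]
    show (Set.range (f ∘ l.foldr (· ∘ ·) id)).Infinite
    rw [Set.range_comp]
    exact imageInfIci hall (hl f List.mem_cons_self).1 (hl f List.mem_cons_self).2 hih

noncomputable def retr (F : Finset Y) (hF : F.Nonempty) : Y → Y := fun y =>
  if h : (F.filter (fun z => z ≤ y)).Nonempty then (F.filter (fun z => z ≤ y)).max' h
  else F.min' hF

theorem retr_mono {F : Finset Y} (hF : F.Nonempty) : Monotone (retr F hF) := by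
  intro u v huv
  unfold retr
  by_cases hu : (F.filter (fun z => z ≤ u)).Nonempty
  · have hv : (F.filter (fun z => z ≤ v)).Nonempty := by
      obtain ⟨w, hw⟩ := hu
      exact ⟨w, Finset.mem_filter.mpr ⟨(Finset.mem_filter.mp hw).1,
        (Finset.mem_filter.mp hw).2.trans huv⟩⟩
    rw [dif_pos hu, dif_pos hv]
    apply Finset.max'_le
    intro z hz
    refine Finset.le_max' _ z (Finset.mem_filter.mpr ?_)
    exact ⟨(Finset.mem_filter.mp hz).1, (Finset.mem_filter.mp hz).2.trans huv⟩
  · rw [dif_neg hu]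
    by_cases hv : (F.filter (fun z => z ≤ v)).Nonempty
    · rw [dif_pos hv]
      exact Finset.min'_le F _ (Finset.mem_filter.mp (Finset.max'_mem _ hv)).1
    · rw [dif_neg hv]

theorem retr_mem {F : Finset Y} (hF : F.Nonempty) (y : Y) : retr F hF y ∈ F := by
  unfold retr
  by_cases hy : (F.filter (fun z => z ≤ y)).Nonempty
  · rw [dif_pos hy]
    exact (Finset.mem_filter.mp (Finset.max'_mem _ hy)).1
  · rw [dif_neg hy]
    exact Finset.min'_mem F hF

theorem retr_fix {F : Finset Y} (hF : F.Nonempty) {x : Y} (hx : x ∈ F) :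
    retr F hF x = x := by
  unfold retr
  have hne : (F.filter (fun z => z ≤ x)).Nonempty :=
    ⟨x, Finset.mem_filter.mpr ⟨hx, le_rfl⟩⟩
  rw [dif_pos hne]
  refine _root_.le_antisymm (Finset.max'_le _ _ _ ?_)
    (Finset.le_max' (F.filter (fun z => z ≤ x)) x (Finset.mem_filter.mpr ⟨hx, le_rfl⟩))
  intro z hz
  exact (Finset.mem_filter.mp hz).2

theorem range_retr {F : Finset Y} (hF : F.Nonempty) :
    Set.range (retr F hF) = (F : Set Y) := by
  apply Set.Subset.antisymm
  · rintro _ ⟨y, rfl⟩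
    exact retr_mem hF y
  · intro x hx
    exact ⟨x, retr_fix hF hx⟩

theorem list_split {τ : Type*} (P : τ → Prop) :
    ∀ l : List τ, (∀ f ∈ l, P f) ∨
      ∃ l₁ f l₂, l = l₁ ++ f :: l₂ ∧ ¬ P f ∧ ∀ g ∈ l₁, P g := by
  intro l
  induction l with
  | nil => exact Or.inl (by simp)
  | cons a l ih =>
    by_cases ha : P a
    · rcases ih with h | ⟨l₁, f, l₂, rfl, hf, hl₁⟩
      · refine Or.inl ?_
        intro f hf
        rcases List.mem_cons.mp hf with rfl | hf
        exacts [ha, h f hf]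
      · refine Or.inr ⟨a :: l₁, f, l₂, rfl, hf, ?_⟩
        intro g hg
        rcases List.mem_cons.mp hg with rfl | hg
        exacts [ha, hl₁ g hg]
    · exact Or.inr ⟨[], a, l, rfl, ha, by simp⟩

theorem card_bound {T : Set Y} (hT : T.Finite)
    {l₁ l₂ : List (Y → Y)} {f : Y → Y} (hfT : Set.range f ⊆ T)
    {F : Finset Y} (hF : (F : Set Y) ⊆ Set.range ((l₁ ++ f :: l₂).foldr (· ∘ ·) id)) :
    F.card ≤ T.ncard := by
  have h1 : Set.range ((l₁ ++ f :: l₂).foldr (· ∘ ·) id) ⊆ (l₁.foldr (· ∘ ·) id) '' T := by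
    rw [List.foldr_append, foldr_comp_eq, Set.range_comp]
    apply Set.image_mono
    rintro _ ⟨x, rfl⟩
    exact hfT ⟨_, rfl⟩
  calc F.card = (F : Set Y).ncard := (Set.ncard_coe_finset F).symm
    _ ≤ ((l₁.foldr (· ∘ ·) id) '' T).ncard :=
        Set.ncard_le_ncard (hF.trans h1) (hT.image _)
    _ ≤ T.ncard := Set.ncard_image_le hT

theorem pure_of {B : Set (Y → Y)} (hBfin : B.Finite)
    (hBmono : ∀ f ∈ B, Monotone f) {α : Y → Y}
    {l : List (Y → Y)} (hmem : ∀ f ∈ l, (Monotone f ∧ (Set.range f).Infinite) ∨ f ∈ B)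
    (heq : α = l.foldr (· ∘ ·) id)
    {F : Finset Y} (hFsub : (F : Set Y) ⊆ Set.range α)
    (hFcard : (⋃ f ∈ {g | g ∈ B ∧ (Set.range g).Finite}, Set.range f).ncard < F.card) :
    ∀ f ∈ l, Monotone f ∧ (Set.range f).Infinite := by
  classical
  set T : Set Y := ⋃ f ∈ {g | g ∈ B ∧ (Set.range g).Finite}, Set.range f with hTdef
  have hTfin : T.Finite :=
    Set.Finite.biUnion (hBfin.subset (fun g hg => hg.1)) (fun f hf => hf.2)
  rcases list_split (fun f => (Set.range f).Infinite) l with hall | ⟨l₁, f, l₂, rfl, hfni, hl₁⟩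
  · intro f hf
    refine ⟨?_, hall f hf⟩
    rcases hmem f hf with ⟨hm, _⟩ | hB
    exacts [hm, hBmono f hB]
  · exfalso
    have hfB : f ∈ B := by
      rcases hmem f (by simp) with ⟨_, hi⟩ | hB
      exacts [absurd hi hfni, hB]
    have hfT : Set.range f ⊆ T :=
      Set.subset_biUnion_of_mem (u := fun f => Set.range f)
        (show f ∈ {g | g ∈ B ∧ (Set.range g).Finite} from ⟨hfB, Set.not_infinite.mp hfni⟩)
    have hb := card_bound hTfin hfT (heq ▸ hFsub)
    omega

theorem noGen [Infinite Y]
    (Hno : ∀ x : Y, (Set.Iic x).Finite ∨ (Set.Ici x).Finite)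
    {B : Set (Y → Y)} (hBfin : B.Finite) (hBmono : ∀ f ∈ B, Monotone f) :
    ∃ α : Y → Y, Monotone α ∧ ¬ ∃ l : List (Y → Y), l ≠ [] ∧
      (∀ f ∈ l, (Monotone f ∧ (Set.range f).Infinite) ∨ f ∈ B) ∧
      α = l.foldr (· ∘ ·) id := by
  classical
  set T : Set Y := ⋃ f ∈ {g | g ∈ B ∧ (Set.range g).Finite}, Set.range f with hTdef
  by_cases h1 : ∀ x : Y, (Set.Iic x).Finite
  · obtain ⟨t, htsub, htfin, htcard⟩ :=
      (Set.infinite_univ (α := Y)).exists_subset_ncard_eq (T.ncard + 1)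
    set F := htfin.toFinset with hFdef
    have hFcard : F.card = T.ncard + 1 := by
      rw [← htcard, Set.ncard_eq_toFinset_card t htfin]
    have hFne : F.Nonempty := Finset.card_pos.mp (by omega)
    refine ⟨retr F hFne, retr_mono hFne, ?_⟩
    rintro ⟨l, hne, hmem, heq⟩
    have hFsub : (F : Set Y) ⊆ Set.range (retr F hFne) := by
      rw [range_retr]
    have hpure := pure_of hBfin hBmono hmem heq hFsub (by rw [← hTdef]; omega)
    have hinf := foldrInfIic h1 l hpure
    rw [← heq, range_retr] at hinf
    exact hinf (F.finite_toSet)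
  · by_cases h2 : ∀ x : Y, (Set.Ici x).Finite
    · obtain ⟨t, htsub, htfin, htcard⟩ :=
        (Set.infinite_univ (α := Y)).exists_subset_ncard_eq (T.ncard + 1)
      set F := htfin.toFinset with hFdef
      have hFcard : F.card = T.ncard + 1 := by
        rw [← htcard, Set.ncard_eq_toFinset_card t htfin]
      have hFne : F.Nonempty := Finset.card_pos.mp (by omega)
      refine ⟨retr F hFne, retr_mono hFne, ?_⟩
      rintro ⟨l, hne, hmem, heq⟩
      have hFsub : (F : Set Y) ⊆ Set.range (retr F hFne) := by
        rw [range_retr]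
      have hpure := pure_of hBfin hBmono hmem heq hFsub (by rw [← hTdef]; omega)
      have hinf := foldrInfIci h2 l hpure
      rw [← heq, range_retr] at hinf
      exact hinf (F.finite_toSet)
    · push_neg at h1 h2
      obtain ⟨u, hu⟩ := h1
      obtain ⟨v, hv⟩ := h2
      have hltu : ∀ z : Y, (Set.Iic z).Finite → z < u := by
        intro z hz
        by_contra hc
        exact hu (hz.subset (Set.Iic_subset_Iic.mpr (le_of_not_gt hc)))
      have hltv : ∀ z : Y, (Set.Ici z).Finite → v < z := by
        intro z hz
        by_contra hc
        exact hv (hz.subset (Set.Ici_subset_Ici.mpr (le_of_not_gt hc)))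
      by_cases hNEG : ({x : Y | (Set.Iic x).Finite}).Infinite
      · obtain ⟨t, htsub, htfin, htcard⟩ := hNEG.exists_subset_ncard_eq (T.ncard + 2)
        set F' := htfin.toFinset with hF'def
        have hF'card : F'.card = T.ncard + 2 := by
          rw [← htcard, Set.ncard_eq_toFinset_card t htfin]
        have hF'ne : F'.Nonempty := Finset.card_pos.mp (by omega)
        set y₀ := F'.max' hF'ne with hy₀def
        have hy₀mem : y₀ ∈ F' := F'.max'_mem hF'ne
        have hy₀NEG : (Set.Iic y₀).Finite := htsub (htfin.mem_toFinset.mp hy₀mem)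
        set F := F'.erase y₀ with hFdef
        have hFcard : F.card = T.ncard + 1 := by
          rw [hFdef, Finset.card_erase_of_mem hy₀mem, hF'card]; omega
        have hFne : F.Nonempty := Finset.card_pos.mp (by omega)
        have hFNEG : ∀ z ∈ F, (Set.Iic z).Finite := by
          intro z hz
          exact htsub (htfin.mem_toFinset.mp (Finset.mem_of_mem_erase hz))
        have hFlt : ∀ z ∈ F, z < y₀ := by
          intro z hz
          exact lt_of_le_of_ne (F'.le_max' z (Finset.mem_of_mem_erase hz))
            (Finset.ne_of_mem_erase hz)
        set α : Y → Y := fun y => if y < y₀ then retr F hFne y else u with hαdef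
        have hαmono : Monotone α := by
          intro a b hab
          simp only [hαdef]
          by_cases hb : b < y₀
          · have ha : a < y₀ := lt_of_le_of_lt hab hb
            rw [if_pos ha, if_pos hb]
            exact retr_mono hFne hab
          · rw [if_neg hb]
            by_cases ha : a < y₀
            · rw [if_pos ha]
              exact (hltu _ (hFNEG _ (retr_mem hFne a))).le
            · rw [if_neg ha]
        refine ⟨α, hαmono, ?_⟩
        rintro ⟨l, hne, hmem, heq⟩
        have hFsub : (F : Set Y) ⊆ Set.range α := by
          intro z hz
          refine ⟨z, ?_⟩
          simp only [hαdef]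
          rw [if_pos (hFlt z hz)]
          exact retr_fix hFne hz
        have hpure := pure_of hBfin hBmono hmem heq hFsub (by rw [← hTdef]; omega)
        have hfin := chainIic Hno l hpure hy₀NEG
        rw [← heq] at hfin
        have hαy₀ : α y₀ = u := by
          simp only [hαdef]
          rw [if_neg (lt_irrefl y₀)]
        rw [hαy₀] at hfin
        exact hu hfin
      · have hPOS : ({x : Y | (Set.Ici x).Finite}).Infinite := by
          rw [Set.not_infinite] at hNEG
          have hdiff : (Set.univ \ {x : Y | (Set.Iic x).Finite}).Infinite :=
            Set.infinite_univ.diff hNEG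
          refine hdiff.mono ?_
          rintro x ⟨-, hx⟩
          exact (Hno x).resolve_left hx
        obtain ⟨t, htsub, htfin, htcard⟩ := hPOS.exists_subset_ncard_eq (T.ncard + 2)
        set F' := htfin.toFinset with hF'def
        have hF'card : F'.card = T.ncard + 2 := by
          rw [← htcard, Set.ncard_eq_toFinset_card t htfin]
        have hF'ne : F'.Nonempty := Finset.card_pos.mp (by omega)
        set y₀ := F'.min' hF'ne with hy₀def
        have hy₀mem : y₀ ∈ F' := F'.min'_mem hF'ne
        have hy₀POS : (Set.Ici y₀).Finite := htsub (htfin.mem_toFinset.mp hy₀mem)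
        set F := F'.erase y₀ with hFdef
        have hFcard : F.card = T.ncard + 1 := by
          rw [hFdef, Finset.card_erase_of_mem hy₀mem, hF'card]; omega
        have hFne : F.Nonempty := Finset.card_pos.mp (by omega)
        have hFPOS : ∀ z ∈ F, (Set.Ici z).Finite := by
          intro z hz
          exact htsub (htfin.mem_toFinset.mp (Finset.mem_of_mem_erase hz))
        have hFgt : ∀ z ∈ F, y₀ < z := by
          intro z hz
          exact lt_of_le_of_ne (F'.min'_le z (Finset.mem_of_mem_erase hz))
            (Ne.symm (Finset.ne_of_mem_erase hz))
        set α : Y → Y := fun y => if y₀ < y then retr F hFne y else v with hαdef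
        have hαmono : Monotone α := by
          intro a b hab
          simp only [hαdef]
          by_cases ha : y₀ < a
          · have hb : y₀ < b := lt_of_lt_of_le ha hab
            rw [if_pos ha, if_pos hb]
            exact retr_mono hFne hab
          · rw [if_neg ha]
            by_cases hb : y₀ < b
            · rw [if_pos hb]
              exact (hltv _ (hFPOS _ (retr_mem hFne b))).le
            · rw [if_neg hb]
        refine ⟨α, hαmono, ?_⟩
        rintro ⟨l, hne, hmem, heq⟩
        have hFsub : (F : Set Y) ⊆ Set.range α := by
          intro z hz
          refine ⟨z, ?_⟩
          simp only [hαdef]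
          rw [if_pos (hFgt z hz)]
          exact retr_fix hFne hz
        have hpure := pure_of hBfin hBmono hmem heq hFsub (by rw [← hTdef]; omega)
        have hfin := chainIci Hno l hpure hy₀POS
        rw [← heq] at hfin
        have hαy₀ : α y₀ = v := by
          simp only [hαdef]
          rw [if_neg (lt_irrefl y₀)]
        rw [hαy₀] at hfin
        exact hv hfin

end NoGen

end Stmt16


theorem stmt_16 {X : Type*} [LinearOrder X] [Countable X] [Infinite X] :
    let J : Set (X → X) := {f | Monotone f ∧ (Set.range f).Infinite}
    let gen : Set (X → X) → Prop := fun B =>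
      ∀ α : X → X, Monotone α → ∃ l : List (X → X), l ≠ [] ∧
        (∀ f ∈ l, f ∈ J ∪ B) ∧ α = l.foldr (· ∘ ·) id
    ((gen ∅ ↔ ∃ B : Set (X → X), B.Finite ∧ (∀ f ∈ B, Monotone f) ∧ gen B) ∧
     ((∃ B : Set (X → X), B.Finite ∧ (∀ f ∈ B, Monotone f) ∧ gen B) ↔
       ∃ x : X, (Set.Iic x).Infinite ∧ (Set.Ici x).Infinite)) := by
  intro J gen
  have hP3P1 : (∃ x : X, (Set.Iic x).Infinite ∧ (Set.Ici x).Infinite) → gen ∅ := by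
    rintro ⟨x₀, h1, h2⟩ α hα
    have hIio : (Set.Iio x₀).Infinite := by
      by_contra hfin
      rw [Set.not_infinite] at hfin
      exact h1 (by rw [← Set.Iio_insert]; exact hfin.insert x₀)
    have hIoi : (Set.Ioi x₀).Infinite := by
      by_contra hfin
      rw [Set.not_infinite] at hfin
      exact h2 (by rw [← Set.Ioi_insert]; exact hfin.insert x₀)
    obtain ⟨l, hne, hl, heq⟩ := Stmt16.gen_all hIio hIoi hα
    exact ⟨l, hne, fun f hf => Or.inl (hl f hf), heq⟩
  have hP2P3 : (∃ B : Set (X → X), B.Finite ∧ (∀ f ∈ B, Monotone f) ∧ gen B) →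
      ∃ x : X, (Set.Iic x).Infinite ∧ (Set.Ici x).Infinite := by
    rintro ⟨B, hBfin, hBmono, hgen⟩
    by_contra hno
    push_neg at hno
    have Hno : ∀ x : X, (Set.Iic x).Finite ∨ (Set.Ici x).Finite := by
      intro x
      by_cases h : (Set.Iic x).Finite
      · exact Or.inl h
      · exact Or.inr (hno x h)
    obtain ⟨α, hαm, hbad⟩ := Stmt16.noGen Hno hBfin hBmono
    obtain ⟨l, hne, hmem, heq⟩ := hgen α hαm
    exact hbad ⟨l, hne, fun f hf => hmem f hf, heq⟩
  exact ⟨⟨fun h => ⟨∅, Set.finite_empty, fun f hf => absurd hf (Set.notMem_empty f), h⟩,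
      fun h => hP3P1 (hP2P3 h)⟩,
    ⟨hP2P3, fun h => ⟨∅, Set.finite_empty, fun f hf => absurd hf (Set.notMem_empty f),
      hP3P1 h⟩⟩⟩
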